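/- Let A ∈ ℝ^{n×n} be a positive semidefinite matrix of rank r, and u ∈ ℝ^n a vector not orthogonal to Ker(A). Then Det(A + u u^T) ≥ λ_min(A + u u^T) · Det(A), where λ_min denotes the smallest nonzero eigenvalue and Det the pseudo-determinant. -/

import Mathlib

open Matrix

section Helpers

variable {n : Type*} [Fintype n]

private lemma helper_mul_vecMulVec (M : Matrix n n ℝ) (a b : n → ℝ) :
    M * vecMulVec a b = vecMulVec (M *ᵥ a) b := by
  ext i j
  simp only [mul_apply, vecMulVec_apply, mulVec, dotProduct, Finset.sum_mul]
  exact Finset.sum_congr rfl fun k _ => by ring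

private lemma helper_vecMulVec_mul (M : Matrix n n ℝ) (a b : n → ℝ) :
    vecMulVec a b * M = vecMulVec a (b ᵥ* M) := by
  ext i j
  simp only [mul_apply, vecMulVec_apply, vecMul, dotProduct, Finset.mul_sum]
  exact Finset.sum_congr rfl fun k _ => by ring

private lemma helper_vecMulVec_mul_vecMulVec (a b c d : n → ℝ) :
    vecMulVec a b * vecMulVec c d = (b ⬝ᵥ c) • vecMulVec a d := by
  ext i j
  simp only [mul_apply, vecMulVec_apply, dotProduct, Matrix.smul_apply, Finset.sum_mul, smul_eq_mul]
  exact Finset.sum_congr rfl fun k _ => by ring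

private lemma helper_vecMulVec_mulVec (a b c : n → ℝ) :
    vecMulVec a b *ᵥ c = (b ⬝ᵥ c) • a := by
  ext i
  simp only [vecMulVec_apply, mulVec, dotProduct, Pi.smul_apply, smul_eq_mul, Finset.sum_mul]
  exact Finset.sum_congr rfl fun k _ => by ring

private lemma helper_transpose_vecMulVec (a b : n → ℝ) :
    (vecMulVec a b)ᵀ = vecMulVec b a := by
  ext i j; simp [vecMulVec_apply, mul_comm]

private lemma helper_mulVec_dot (M : Matrix n n ℝ) (x y : n → ℝ) :
    (M *ᵥ x) ⬝ᵥ y = x ⬝ᵥ (Mᵀ *ᵥ y) := by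
  rw [dotProduct_comm, dotProduct_mulVec, ← mulVec_transpose, dotProduct_comm]

end Helpers

private lemma det_diagonal_add_idem {m : ℕ} (ν : Fin m → ℝ) (P : Matrix (Fin m) (Fin m) ℝ)
    (h1 : diagonal ν * P = 0) (h2 : P * diagonal ν = 0) (h3 : P * P = P)
    (hdet : det (diagonal ν + P) ≠ 0) :
    det (diagonal ν + P) = ∏ i ∈ Finset.univ.filter (fun i => ν i ≠ 0), ν i := by
  have hrow : ∀ i j, ν i ≠ 0 → P i j = 0 := by
    intro i j hi
    have := congrFun (congrFun h1 i) j
    simp [mul_apply, diagonal, Finset.sum_ite_eq] at this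
    tauto
  have hcol : ∀ i j, ν j ≠ 0 → P i j = 0 := by
    intro i j hj
    have := congrFun (congrFun h2 i) j
    simp [mul_apply, diagonal, Finset.sum_ite_eq'] at this
    tauto
  set ν' : Fin m → ℝ := fun i => if ν i = 0 then 1 else ν i with hν'
  set J : Matrix (Fin m) (Fin m) ℝ := diagonal (fun i => if ν i = 0 then 0 else 1) with hJ
  have key : diagonal ν + P = diagonal ν' * (J + P) := by
    ext i j
    rw [diagonal_mul]
    by_cases hi : ν i = 0
    · simp [hν', hJ, hi, diagonal_apply]
    · simp only [Matrix.add_apply, hν', hJ, if_neg hi, diagonal_apply, hrow i j hi]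
      by_cases hij : i = j <;> simp [hij, hi]
  have hJP : (J + P) * (J + P) = J + P := by
    have hJJ : J * J = J := by
      rw [hJ, diagonal_mul_diagonal]
      ext i j
      by_cases hij : i = j
      · subst hij
        by_cases hi : ν i = 0 <;> simp [diagonal_apply, hi]
      · simp [diagonal_apply, hij]
    have hJP0 : J * P = 0 := by
      ext i j; rw [hJ, diagonal_mul]
      by_cases hi : ν i = 0 <;> simp [hi, hrow i j]
    have hPJ0 : P * J = 0 := by
      ext i j; rw [hJ, mul_diagonal]
      by_cases hj : ν j = 0 <;> simp [hj, hcol i j]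
    rw [add_mul, mul_add, mul_add, hJJ, hJP0, hPJ0, h3]
    simp
  have hx : det (J + P) * det (J + P) = det (J + P) := by
    rw [← det_mul, hJP]
  have hdet2 : det (diagonal ν + P) = (∏ i, ν' i) * det (J + P) := by
    rw [key, det_mul, det_diagonal]
  have hxne : det (J + P) ≠ 0 := by
    intro h; rw [hdet2, h, mul_zero] at hdet; exact hdet rfl
  have hxone : det (J + P) = 1 := by
    have h0 : (det (J + P) - 1) * det (J + P) = 0 := by linear_combination hx
    rcases mul_eq_zero.mp h0 with h | h
    · linarith
    · exact absurd h hxne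
  rw [hdet2, hxone, mul_one, Finset.prod_filter]
  exact Finset.prod_congr rfl fun i _ => by by_cases hi : ν i = 0 <;> simp [hν', hi]

private lemma det_add_idem_eq_prod {m : ℕ} {M P : Matrix (Fin m) (Fin m) ℝ}
    (hM : M.IsHermitian) (hMP : M * P = 0) (hPM : P * M = 0) (hPP : P * P = P)
    (hdet : det (M + P) ≠ 0) :
    det (M + P) = ∏ i ∈ Finset.univ.filter (fun i => hM.eigenvalues i ≠ 0), hM.eigenvalues i := by
  set V : Matrix (Fin m) (Fin m) ℝ := (hM.eigenvectorUnitary : Matrix (Fin m) (Fin m) ℝ) with hV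
  have hVV : V * star V = 1 := (Matrix.mem_unitaryGroup_iff).mp hM.eigenvectorUnitary.2
  have hVV' : star V * V = 1 := (Matrix.mem_unitaryGroup_iff').mp hM.eigenvectorUnitary.2
  set D : Matrix (Fin m) (Fin m) ℝ := diagonal hM.eigenvalues with hD
  have hspec : M = V * D * star V := by simpa using hM.spectral_theorem
  set P' : Matrix (Fin m) (Fin m) ℝ := star V * P * V with hP'
  have hMD : star V * M * V = D := by
    rw [hspec]
    calc star V * (V * D * star V) * V = (star V * V) * D * (star V * V) := by
          simp only [Matrix.mul_assoc]
      _ = D := by rw [hVV']; simp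
  have hPd : V * P' * star V = P := by
    rw [hP']
    calc V * (star V * P * V) * star V = (V * star V) * P * (V * star V) := by
          simp only [Matrix.mul_assoc]
      _ = P := by rw [hVV]; simp
  have hdecomp : M + P = V * (D + P') * star V := by
    rw [Matrix.mul_add, Matrix.add_mul, hPd, ← hspec]
  have hdetVV : det V * det (star V) = 1 := by rw [← det_mul, hVV, det_one]
  have hdeteq : det (M + P) = det (D + P') := by
    rw [hdecomp, det_mul, det_mul]
    calc det V * det (D + P') * det (star V) = det V * det (star V) * det (D + P') := by ring
      _ = det (D + P') := by rw [hdetVV, one_mul]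
  have hDP' : D * P' = 0 := by
    have : D * P' = star V * (M * P) * V := by
      rw [← hMD, hP']
      calc star V * M * V * (star V * P * V)
          = star V * M * ((V * star V) * P) * V := by simp only [Matrix.mul_assoc]
        _ = star V * (M * P) * V := by rw [hVV]; simp only [Matrix.one_mul, Matrix.mul_assoc]
    rw [this, hMP]; simp
  have hP'D : P' * D = 0 := by
    have : P' * D = star V * (P * M) * V := by
      rw [← hMD, hP']
      calc star V * P * V * (star V * M * V)
          = star V * P * ((V * star V) * M) * V := by simp only [Matrix.mul_assoc]
        _ = star V * (P * M) * V := by rw [hVV]; simp only [Matrix.one_mul, Matrix.mul_assoc]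
    rw [this, hPM]; simp
  have hP'P' : P' * P' = P' := by
    rw [hP']
    calc star V * P * V * (star V * P * V)
        = star V * P * ((V * star V) * P) * V := by simp only [Matrix.mul_assoc]
      _ = star V * (P * P) * V := by rw [hVV]; simp only [Matrix.one_mul, Matrix.mul_assoc]
      _ = star V * P * V := by rw [hPP, Matrix.mul_assoc]
  rw [hdeteq] at hdet ⊢
  exact det_diagonal_add_idem _ _ hDP' hP'D hP'P' hdet

set_option maxHeartbeats 1000000 in
/-- For a PSD matrix `A` and a vector `u` not orthogonal to `Ker A`,
`Det(A + u uᵀ) ≥ λ_min(A + u uᵀ) · Det(A)`, where `λ_min` is the smallest nonzero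
eigenvalue and `Det` the pseudo-determinant (product of nonzero eigenvalues). -/
theorem pseudo_det_lower_bound {n : ℕ} (A : Matrix (Fin n) (Fin n) ℝ)
    (hA : A.PosSemidef) (r : ℕ) (hr : A.rank = r) (u : Fin n → ℝ)
    (hu : ∃ v : Fin n → ℝ, A *ᵥ v = 0 ∧ u ⬝ᵥ v ≠ 0)
    (hA' : (A + vecMulVec u u).IsHermitian) :
    sInf {x : ℝ | (∃ i, hA'.eigenvalues i = x) ∧ x ≠ 0}
        * (∏ i ∈ Finset.univ.filter (fun i => hA.1.eigenvalues i ≠ 0), hA.1.eigenvalues i)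
      ≤ ∏ i ∈ Finset.univ.filter (fun i => hA'.eigenvalues i ≠ 0), hA'.eigenvalues i := by
  classical
  set B : Matrix (Fin n) (Fin n) ℝ := A + vecMulVec u u with hB
  set ν : Fin n → ℝ := hA.1.eigenvalues with hν
  set μ : Fin n → ℝ := hA'.eigenvalues with hμ
  set U : Matrix (Fin n) (Fin n) ℝ := (hA.1.eigenvectorUnitary : Matrix (Fin n) (Fin n) ℝ)
    with hUdef
  have hUU : U * star U = 1 := (Matrix.mem_unitaryGroup_iff).mp hA.1.eigenvectorUnitary.2
  have hUU' : star U * U = 1 := (Matrix.mem_unitaryGroup_iff').mp hA.1.eigenvectorUnitary.2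
  have hspecA : A = U * diagonal ν * star U := by simpa using hA.1.spectral_theorem
  set e : Fin n → ℝ := fun i => if ν i = 0 then 1 else 0 with he
  set P : Matrix (Fin n) (Fin n) ℝ := U * diagonal e * star U with hP
  -- conjugation helper
  have hconj : ∀ X Y : Matrix (Fin n) (Fin n) ℝ,
      (U * X * star U) * (U * Y * star U) = U * (X * Y) * star U := by
    intro X Y
    calc (U * X * star U) * (U * Y * star U)
        = U * X * ((star U * U) * (Y * star U)) := by simp only [Matrix.mul_assoc]
      _ = U * (X * Y) * star U := by rw [hUU']; simp only [Matrix.one_mul, Matrix.mul_assoc]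
  have hAP : A * P = 0 := by
    rw [hspecA, hP, hconj, diagonal_mul_diagonal]
    have : (fun i => ν i * e i) = fun _ => (0 : ℝ) := by
      funext i; by_cases hi : ν i = 0 <;> simp [he, hi]
    rw [this]
    simp [diagonal_zero]
  have hPA : P * A = 0 := by
    rw [hspecA, hP, hconj, diagonal_mul_diagonal]
    have : (fun i => e i * ν i) = fun _ => (0 : ℝ) := by
      funext i; by_cases hi : ν i = 0 <;> simp [he, hi]
    rw [this]
    simp [diagonal_zero]
  have hPP : P * P = P := by
    rw [hP, hconj, diagonal_mul_diagonal]
    have : (fun i => e i * e i) = e := by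
      funext i; by_cases hi : ν i = 0 <;> simp [he, hi]
    rw [this]
  have hstarU : star U = Uᵀ := by
    ext i j; simp [Matrix.star_apply]
  have hPsymm : Pᵀ = P := by
    rw [hP, hstarU]
    rw [transpose_mul, transpose_mul, transpose_transpose, diagonal_transpose,
      Matrix.mul_assoc]
  have hPker : ∀ w : Fin n → ℝ, A *ᵥ w = 0 → P *ᵥ w = w := by
    intro w hw
    have hc : diagonal ν *ᵥ (star U *ᵥ w) = 0 := by
      have h1 : star U *ᵥ (A *ᵥ w) = 0 := by rw [hw, mulVec_zero]
      have hm : star U * A = diagonal ν * star U := by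
        rw [hspecA]
        calc star U * (U * diagonal ν * star U) = (star U * U) * (diagonal ν * star U) := by
              simp only [Matrix.mul_assoc]
          _ = diagonal ν * star U := by rw [hUU']; simp
      have h2 : star U *ᵥ (A *ᵥ w) = diagonal ν *ᵥ (star U *ᵥ w) := by
        rw [mulVec_mulVec, mulVec_mulVec, hm]
      rw [← h2, h1]
    have hc' : ∀ i, ν i * (star U *ᵥ w) i = 0 := by
      intro i
      have := congrFun hc i
      simpa [mulVec_diagonal] using this
    have hec : diagonal e *ᵥ (star U *ᵥ w) = star U *ᵥ w := by
      ext i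
      have := hc' i
      by_cases hi : ν i = 0
      · simp [mulVec_diagonal, he, hi]
      · have : (star U *ᵥ w) i = 0 := by
          rcases mul_eq_zero.mp this with h | h
          · exact absurd h hi
          · exact h
        simp [mulVec_diagonal, he, hi, this]
    rw [hP]
    rw [← mulVec_mulVec, ← mulVec_mulVec, hec, mulVec_mulVec, hUU, one_mulVec]
  set u₀ : Fin n → ℝ := P *ᵥ u with hu₀
  set t : ℝ := u ⬝ᵥ u₀ with ht
  have hAu₀ : A *ᵥ u₀ = 0 := by
    rw [hu₀, mulVec_mulVec, hAP, zero_mulVec]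
  have hPu₀ : P *ᵥ u₀ = u₀ := by
    rw [hu₀, mulVec_mulVec, hPP]
  have hu₀u₀ : u₀ ⬝ᵥ u₀ = t := by
    rw [ht, hu₀]
    rw [helper_mulVec_dot, hPsymm, mulVec_mulVec, hPP]
  have htne : t ≠ 0 := by
    intro ht0
    obtain ⟨w, hw1, hw2⟩ := hu
    have hu₀0 : u₀ = 0 := by
      rw [← dotProduct_self_eq_zero (v := u₀), hu₀u₀, ht0]
    have : u ⬝ᵥ w = 0 := by
      have hPw : P *ᵥ w = w := hPker w hw1
      calc u ⬝ᵥ w = u ⬝ᵥ (P *ᵥ w) := by rw [hPw]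
        _ = (Pᵀ *ᵥ u) ⬝ᵥ w := by rw [helper_mulVec_dot, transpose_transpose]
        _ = u₀ ⬝ᵥ w := by rw [hPsymm]
        _ = 0 := by rw [hu₀0, zero_dotProduct]
    exact hw2 this
  have htpos : 0 < t := by
    have h0t : (0:ℝ) ≤ u₀ ⬝ᵥ u₀ := Finset.sum_nonneg fun i _ => mul_self_nonneg _
    rw [hu₀u₀] at h0t
    exact lt_of_le_of_ne h0t (Ne.symm htne)
  -- the pseudo-determinant of A
  set dA : ℝ := ∏ i ∈ Finset.univ.filter (fun i => ν i ≠ 0), ν i with hdA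
  have hdApos : 0 < dA := by
    rw [hdA]
    refine Finset.prod_pos fun i hi => ?_
    have hine : ν i ≠ 0 := (Finset.mem_filter.mp hi).2
    exact lt_of_le_of_ne (hA.eigenvalues_nonneg i) (Ne.symm hine)
  set G : Matrix (Fin n) (Fin n) ℝ := A + P with hG
  have hdetG : det G = dA := by
    have hAPdecomp : G = U * diagonal (fun i => ν i + e i) * star U := by
      rw [hG, hspecA, hP, ← Matrix.add_mul, ← Matrix.mul_add, diagonal_add]
    rw [hAPdecomp, det_mul, det_mul, det_diagonal]
    have hdetUU : det U * det (star U) = 1 := by rw [← det_mul, hUU, det_one]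
    calc (det U * ∏ i, (ν i + e i)) * det (star U)
        = (det U * det (star U)) * ∏ i, (ν i + e i) := by ring
      _ = ∏ i, (ν i + e i) := by rw [hdetUU, one_mul]
      _ = dA := by
          rw [hdA, Finset.prod_filter]
          exact Finset.prod_congr rfl fun i _ => by by_cases hi : ν i = 0 <;> simp [he, hi]
  have hGunit : IsUnit G.det := by
    rw [hdetG]; exact (ne_of_gt hdApos).isUnit
  have hGu₀ : G *ᵥ u₀ = u₀ := by rw [hG, add_mulVec, hAu₀, hPu₀, zero_add]
  have hGinvu₀ : G⁻¹ *ᵥ u₀ = u₀ := by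
    conv_lhs => rw [← hGu₀]
    rw [mulVec_mulVec, nonsing_inv_mul _ hGunit, one_mulVec]
  have hAsym : Aᵀ = A := by
    ext i j
    nth_rewrite 2 [← hA.1]
    simp [conjTranspose_apply]
  have hGsym : Gᵀ = G := by rw [hG, transpose_add, hAsym, hPsymm]
  have hGinvsym : (G⁻¹)ᵀ = G⁻¹ := by rw [transpose_nonsing_inv, hGsym]
  set N : Matrix (Fin n) (Fin n) ℝ := vecMulVec u₀ u₀ with hN
  set Q : Matrix (Fin n) (Fin n) ℝ := P - t⁻¹ • N with hQ
  have hAN : A * N = 0 := by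
    rw [hN, helper_mul_vecMulVec, hAu₀]
    ext i j; simp [vecMulVec_apply]
  have hPN : P * N = N := by rw [hN, helper_mul_vecMulVec, hPu₀]
  have hvecMulP : ∀ x : Fin n → ℝ, x ᵥ* P = P *ᵥ x := by
    intro x; rw [← mulVec_transpose, hPsymm]
  have hNP : N * P = N := by rw [hN, helper_vecMulVec_mul, hvecMulP, hPu₀]
  have hNN : N * N = t • N := by rw [hN, helper_vecMulVec_mul_vecMulVec, hu₀u₀]
  have hUUP : vecMulVec u u * P = vecMulVec u u₀ := by
    rw [helper_vecMulVec_mul, hvecMulP, ← hu₀]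
  have hUUN : vecMulVec u u * N = t • vecMulVec u u₀ := by
    rw [hN, helper_vecMulVec_mul_vecMulVec, ← ht]
  have hBQ : B * Q = 0 := by
    rw [hB, hQ, Matrix.add_mul, Matrix.mul_sub, Matrix.mul_sub, Matrix.mul_smul, Matrix.mul_smul,
      hAP, hAN, hUUP, hUUN, smul_smul, inv_mul_cancel₀ htne, one_smul]
    simp
  have hQsymm : Qᵀ = Q := by
    rw [hQ, transpose_sub, transpose_smul, hN, helper_transpose_vecMulVec, hPsymm]
  have hBsym : Bᵀ = B := by
    ext i j
    nth_rewrite 2 [← hA']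
    simp [conjTranspose_apply]
  have hQB : Q * B = 0 := by
    have h := congrArg Matrix.transpose hBQ
    rwa [transpose_mul, hQsymm, hBsym, transpose_zero] at h
  have hQQ : Q * Q = Q := by
    rw [hQ]
    simp only [Matrix.sub_mul, Matrix.mul_sub, Matrix.smul_mul, Matrix.mul_smul, smul_smul]
    rw [hPP, hPN, hNP, hNN, smul_smul, inv_mul_cancel₀ htne, one_smul]
    simp
  -- determinant of B + Q via the matrix determinant lemma
  set C2 : Matrix (Fin n) (Fin 2) ℝ := Matrix.of (fun i k => ![u i, u₀ i] k) with hC2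
  set V2 : Matrix (Fin 2) (Fin n) ℝ := Matrix.of (fun k j => ![u j, -(t⁻¹ * u₀ j)] k) with hV2
  have hCV : C2 * V2 = vecMulVec u u - t⁻¹ • N := by
    ext i j
    rw [mul_apply, Fin.sum_univ_two]
    simp [hC2, hV2, hN, vecMulVec_apply]
    try ring
  have hBQdecomp : B + Q = G + C2 * V2 := by
    rw [hCV, hB, hQ, hG]
    abel
  have happ : ∀ (k l : Fin 2),
      (V2 * G⁻¹ * C2) k l = (fun i => V2 k i) ⬝ᵥ (G⁻¹ *ᵥ (fun i => C2 i l)) := by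
    intro k l
    rw [Matrix.mul_assoc, mul_apply]
    simp only [dotProduct, mulVec, mul_apply]
    try rfl
  have hdot2 : ∀ x y : Fin n → ℝ, x ⬝ᵥ (G⁻¹ *ᵥ y) = (G⁻¹ *ᵥ x) ⬝ᵥ y := by
    intro x y
    rw [helper_mulVec_dot, hGinvsym]
  have hneg : ∀ z : Fin n → ℝ, (fun i => -(t⁻¹ * u₀ i)) ⬝ᵥ z = -(t⁻¹ * (u₀ ⬝ᵥ z)) := by
    intro z
    have hfn : (fun i => -(t⁻¹ * u₀ i)) = -(t⁻¹ • u₀) := by funext i; simp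
    rw [hfn, neg_dotProduct, smul_dotProduct, smul_eq_mul]
  have hM2eq : V2 * G⁻¹ * C2 = Matrix.of ![![u ⬝ᵥ (G⁻¹ *ᵥ u), t], ![-1, -1]] := by
    ext k l
    rw [happ]
    fin_cases k <;> fin_cases l
    · simp [hC2, hV2]
    · -- (0,1)
      have : u ⬝ᵥ (G⁻¹ *ᵥ u₀) = t := by rw [hGinvu₀, ht]
      simpa [hC2, hV2] using this
    · -- (1,0)
      have h1 : u₀ ⬝ᵥ (G⁻¹ *ᵥ u) = t := by
        rw [hdot2, hGinvu₀, dotProduct_comm, ht]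
      have : (fun i => -(t⁻¹ * u₀ i)) ⬝ᵥ (G⁻¹ *ᵥ u) = -1 := by
        rw [hneg, h1, inv_mul_cancel₀ htne]
      simpa [hC2, hV2] using this
    · -- (1,1)
      have h1 : u₀ ⬝ᵥ (G⁻¹ *ᵥ u₀) = t := by rw [hGinvu₀, hu₀u₀]
      have : (fun i => -(t⁻¹ * u₀ i)) ⬝ᵥ (G⁻¹ *ᵥ u₀) = -1 := by
        rw [hneg, h1, inv_mul_cancel₀ htne]
      simpa [hC2, hV2] using this
  have hdetBQ : det (B + Q) = dA * t := by
    rw [hBQdecomp, det_add_mul C2 V2 hGunit, hdetG, hM2eq]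
    congr 1
    rw [det_fin_two]
    simp [Matrix.one_apply]
    try ring
  have hprodB : (∏ i ∈ Finset.univ.filter (fun i => μ i ≠ 0), μ i) = dA * t := by
    have hne : det (B + Q) ≠ 0 := by
      rw [hdetBQ]; exact mul_ne_zero (ne_of_gt hdApos) htne
    have h := det_add_idem_eq_prod hA' hBQ hQB hQQ hne
    rw [← h, hdetBQ]
  -- spectral data of B
  set W : Matrix (Fin n) (Fin n) ℝ := (hA'.eigenvectorUnitary : Matrix (Fin n) (Fin n) ℝ)
    with hWdef
  have hWW : W * star W = 1 := (Matrix.mem_unitaryGroup_iff).mp hA'.eigenvectorUnitary.2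
  have hWW' : star W * W = 1 := (Matrix.mem_unitaryGroup_iff').mp hA'.eigenvectorUnitary.2
  have hspecB : B = W * diagonal μ * star W := by simpa using hA'.spectral_theorem
  have hstarW : star W = Wᵀ := by ext i j; simp [Matrix.star_apply]
  set d : Fin n → ℝ := star W *ᵥ u₀ with hd
  have hBu₀ : B *ᵥ u₀ = t • u := by
    rw [hB, add_mulVec, hAu₀, helper_vecMulVec_mulVec, zero_add, ← ht]
  have hdd : d ⬝ᵥ d = t := by
    rw [hd, helper_mulVec_dot, hstarW, transpose_transpose, mulVec_mulVec, ← hstarW, hWW,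
      one_mulVec, hu₀u₀]
  have hmu_dd : d ⬝ᵥ (diagonal μ *ᵥ d) = t * t := by
    have h1 : u₀ ⬝ᵥ (B *ᵥ u₀) = t * t := by
      rw [hBu₀, dotProduct_smul, smul_eq_mul, dotProduct_comm, ← ht]
    have h2 : u₀ ⬝ᵥ (B *ᵥ u₀) = d ⬝ᵥ (diagonal μ *ᵥ d) := by
      conv_lhs => rw [hspecB]
      rw [← mulVec_mulVec, ← mulVec_mulVec]
      rw [show u₀ ⬝ᵥ (W *ᵥ (diagonal μ *ᵥ (star W *ᵥ u₀)))
            = (Wᵀ *ᵥ u₀) ⬝ᵥ (diagonal μ *ᵥ (star W *ᵥ u₀)) from by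
        rw [helper_mulVec_dot (M := Wᵀ), transpose_transpose]]
      rw [← hstarW, ← hd]
    rw [← h2, h1]
  have hdzero : ∀ i, μ i = 0 → d i = 0 := by
    intro i hi
    set w : Fin n → ℝ := fun j => W j i with hw
    have hBW : B * W = W * diagonal μ := by
      conv_lhs => rw [hspecB]
      calc (W * diagonal μ * star W) * W = W * diagonal μ * (star W * W) := by
            simp only [Matrix.mul_assoc]
        _ = W * diagonal μ := by rw [hWW', Matrix.mul_one]
    have hBw : B *ᵥ w = 0 := by
      ext j
      have h1 : (B * W) j i = (W * diagonal μ) j i := by rw [hBW]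
      rw [mul_diagonal] at h1
      have h2 : (B *ᵥ w) j = (B * W) j i := by
        simp [mulVec, mul_apply, dotProduct, hw]
      rw [Pi.zero_apply, h2, h1, hi, mul_zero]
    have hwBw : w ⬝ᵥ (B *ᵥ w) = 0 := by rw [hBw, dotProduct_zero]
    have hexpand : w ⬝ᵥ (B *ᵥ w) = w ⬝ᵥ (A *ᵥ w) + (u ⬝ᵥ w) * (u ⬝ᵥ w) := by
      rw [hB, add_mulVec, dotProduct_add, helper_vecMulVec_mulVec, dotProduct_smul,
        smul_eq_mul, dotProduct_comm w u]
    have hstarw : star w = w := by funext j; simp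
    have hwAw_nonneg : 0 ≤ w ⬝ᵥ (A *ᵥ w) := by
      have := hA.dotProduct_mulVec_nonneg w
      rwa [hstarw] at this
    have hsq : 0 ≤ (u ⬝ᵥ w) * (u ⬝ᵥ w) := mul_self_nonneg _
    have h0 : w ⬝ᵥ (A *ᵥ w) + (u ⬝ᵥ w) * (u ⬝ᵥ w) = 0 := by rw [← hexpand, hwBw]
    have hwAw : w ⬝ᵥ (A *ᵥ w) = 0 := le_antisymm (by linarith) hwAw_nonneg
    have huw : u ⬝ᵥ w = 0 := mul_self_eq_zero.mp (by linarith)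
    have hAw : A *ᵥ w = 0 := by
      have := (hA.dotProduct_mulVec_zero_iff w).mp (by rwa [hstarw])
      exact this
    have hPw : P *ᵥ w = w := hPker w hAw
    have hdw : d i = w ⬝ᵥ u₀ := by
      rw [hd]
      simp [mulVec, dotProduct, Matrix.star_apply, hw]
    rw [hdw, hu₀]
    calc w ⬝ᵥ (P *ᵥ u) = (Pᵀ *ᵥ w) ⬝ᵥ u := by
          rw [helper_mulVec_dot, transpose_transpose]
      _ = w ⬝ᵥ u := by rw [hPsymm, hPw]
      _ = 0 := by rw [dotProduct_comm, huw]
  -- the set of nonzero eigenvalues of B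
  set S : Set ℝ := {x : ℝ | (∃ i, μ i = x) ∧ x ≠ 0} with hS
  have hSfin : S.Finite := (Set.finite_range μ).subset (fun x hx => hx.1)
  have hSne : S.Nonempty := by
    by_contra h
    have hall : ∀ i, μ i = 0 := by
      intro i
      by_contra hi
      exact h ⟨μ i, ⟨i, rfl⟩, hi⟩
    have hdiag0 : diagonal μ = 0 := by
      ext i j
      by_cases hij : i = j <;> simp [diagonal_apply, hij, hall]
    rw [hdiag0, zero_mulVec, dotProduct_zero] at hmu_dd
    exact htne (by nlinarith)
  have hm_le : ∀ i, μ i ≠ 0 → sInf S ≤ μ i := fun i hi =>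
    csInf_le hSfin.bddBelow ⟨⟨i, rfl⟩, hi⟩
  have hmt : sInf S ≤ t := by
    have hsum : sInf S * t ≤ t * t := by
      rw [← hmu_dd, ← hdd]
      rw [show sInf S * (d ⬝ᵥ d) = ∑ i, sInf S * (d i * d i) from by
        simp only [dotProduct, Finset.mul_sum]]
      rw [show d ⬝ᵥ (diagonal μ *ᵥ d) = ∑ i, d i * (μ i * d i) from by
        simp [dotProduct, mulVec_diagonal]]
      refine Finset.sum_le_sum fun i _ => ?_
      by_cases hdi : d i = 0
      · simp [hdi]
      · have hμi : μ i ≠ 0 := fun h0 => hdi (hdzero i h0)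
        have := hm_le i hμi
        nlinarith [mul_self_nonneg (d i)]
    exact le_of_mul_le_mul_right (by linarith) htpos
  calc sInf S * dA ≤ t * dA := mul_le_mul_of_nonneg_right hmt hdApos.le
    _ = dA * t := mul_comm _ _
    _ = ∏ i ∈ Finset.univ.filter (fun i => μ i ≠ 0), μ i := hprodB.symm
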